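/- The embedded Markov chain of the Schlögl model, with transition probabilities P(x, x+1) = (γ₁ + γ₃x(x−1))/μ(x) and P(x, x−1) = (γ₂x + γ₄x(x−1)(x−2))/μ(x), where μ(x) = γ₁ + γ₂x + γ₃x(x−1) + γ₄x(x−1)(x−2), admits a unique stationary distribution: there exists exactly one probability distribution ρ on ℕ satisfying Σ_x ρ(x)·P(x,y) = ρ(y) for all y ∈ ℕ. -/

import Mathlib

/-- Total propensity of the Schlögl model:
`μ(x) = γ₁ + γ₂x + γ₃x(x−1) + γ₄x(x−1)(x−2)`. -/
noncomputable def schloeglMu (γ₁ γ₂ γ₃ γ₄ : ℝ) (x : ℕ) : ℝ :=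
  γ₁ + γ₂ * x + γ₃ * x * ((x : ℝ) - 1) + γ₄ * x * ((x : ℝ) - 1) * ((x : ℝ) - 2)

/-- Transition probabilities of the embedded Schlögl chain:
`P(x, x+1) = (γ₁+γ₃x(x−1))/μ(x)`, `P(x, x−1) = (γ₂x+γ₄x(x−1)(x−2))/μ(x)`, `0` otherwise. -/
noncomputable def schloeglP (γ₁ γ₂ γ₃ γ₄ : ℝ) (x y : ℕ) : ℝ :=
  if y = x + 1 then (γ₁ + γ₃ * x * ((x : ℝ) - 1)) / schloeglMu γ₁ γ₂ γ₃ γ₄ x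
  else if y + 1 = x then
    (γ₂ * x + γ₄ * x * ((x : ℝ) - 1) * ((x : ℝ) - 2)) / schloeglMu γ₁ γ₂ γ₃ γ₄ x
  else 0

noncomputable def sB (γ₁ γ₃ : ℝ) (x : ℕ) : ℝ := γ₁ + γ₃ * x * ((x : ℝ) - 1)
noncomputable def sD (γ₂ γ₄ : ℝ) (x : ℕ) : ℝ :=
  γ₂ * x + γ₄ * x * ((x : ℝ) - 1) * ((x : ℝ) - 2)

noncomputable def sNu (γ₁ γ₂ γ₃ γ₄ : ℝ) : ℕ → ℝ
  | 0 => schloeglMu γ₁ γ₂ γ₃ γ₄ 0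
  | x + 1 => sNu γ₁ γ₂ γ₃ γ₄ x * (sB γ₁ γ₃ x * schloeglMu γ₁ γ₂ γ₃ γ₄ (x + 1)) /
      (schloeglMu γ₁ γ₂ γ₃ γ₄ x * sD γ₂ γ₄ (x + 1))

lemma quad_nonneg (x : ℕ) : 0 ≤ (x : ℝ) * ((x : ℝ) - 1) := by
  rcases x with _ | n
  · norm_num
  · have : ((n : ℝ) + 1) * ((n : ℝ) + 1 - 1) = (n + 1) * n := by ring
    push_cast
    rw [this]
    positivity

lemma cub_nonneg (x : ℕ) : 0 ≤ (x : ℝ) * ((x : ℝ) - 1) * ((x : ℝ) - 2) := by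
  rcases x with _ | _ | n
  · norm_num
  · norm_num
  · push_cast
    have : ((n : ℝ) + 1 + 1) * ((n : ℝ) + 1 + 1 - 1) * ((n : ℝ) + 1 + 1 - 2)
        = (n + 2) * (n + 1) * n := by ring
    rw [this]
    positivity

lemma schloeglP_succ_self (γ₁ γ₂ γ₃ γ₄ : ℝ) (x : ℕ) :
    schloeglP γ₁ γ₂ γ₃ γ₄ x (x + 1) = sB γ₁ γ₃ x / schloeglMu γ₁ γ₂ γ₃ γ₄ x := by
  simp [schloeglP, sB]

lemma schloeglP_self_succ (γ₁ γ₂ γ₃ γ₄ : ℝ) (x : ℕ) :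
    schloeglP γ₁ γ₂ γ₃ γ₄ (x + 1) x = sD γ₂ γ₄ (x + 1) / schloeglMu γ₁ γ₂ γ₃ γ₄ (x + 1) := by
  have h : ¬ (x = x + 1 + 1) := by omega
  simp [schloeglP, sD, h]

lemma schloeglP_zero_eq (γ₁ γ₂ γ₃ γ₄ : ℝ) (x : ℕ) (hx : x ≠ 1) :
    schloeglP γ₁ γ₂ γ₃ γ₄ x 0 = 0 := by
  have h1 : ¬ ((0:ℕ) = x + 1) := by omega
  have h2 : ¬ ((0:ℕ) + 1 = x) := by omega
  simp [schloeglP, h1, h2]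

lemma schloeglP_eq_zero (γ₁ γ₂ γ₃ γ₄ : ℝ) (x k : ℕ) (h1 : x ≠ k) (h2 : x ≠ k + 2) :
    schloeglP γ₁ γ₂ γ₃ γ₄ x (k + 1) = 0 := by
  have ha : ¬ (k + 1 = x + 1) := by omega
  have hb : ¬ (k + 1 + 1 = x) := by omega
  simp [schloeglP, ha, hb, Ne.symm h1]

lemma tsum_station_zero (γ₁ γ₂ γ₃ γ₄ : ℝ) (f : ℕ → ℝ) :
    ∑' x : ℕ, f x * schloeglP γ₁ γ₂ γ₃ γ₄ x 0
      = f 1 * schloeglP γ₁ γ₂ γ₃ γ₄ 1 0 := by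
  apply tsum_eq_single
  intro x hx
  rw [schloeglP_zero_eq γ₁ γ₂ γ₃ γ₄ x hx, mul_zero]

lemma tsum_station_succ (γ₁ γ₂ γ₃ γ₄ : ℝ) (f : ℕ → ℝ) (k : ℕ) :
    ∑' x : ℕ, f x * schloeglP γ₁ γ₂ γ₃ γ₄ x (k + 1)
      = f k * schloeglP γ₁ γ₂ γ₃ γ₄ k (k + 1)
        + f (k + 2) * schloeglP γ₁ γ₂ γ₃ γ₄ (k + 2) (k + 1) := by
  have h : ∑' x : ℕ, f x * schloeglP γ₁ γ₂ γ₃ γ₄ x (k + 1)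
      = ∑ x ∈ ({k, k + 2} : Finset ℕ), f x * schloeglP γ₁ γ₂ γ₃ γ₄ x (k + 1) := by
    apply tsum_eq_sum
    intro x hx
    simp only [Finset.mem_insert, Finset.mem_singleton, not_or] at hx
    rw [schloeglP_eq_zero γ₁ γ₂ γ₃ γ₄ x k hx.1 hx.2, mul_zero]
  rw [h, Finset.sum_pair (by omega)]

section

variable {γ₁ γ₂ γ₃ γ₄ : ℝ} (hγ₁ : 0 < γ₁) (hγ₂ : 0 < γ₂) (hγ₃ : 0 < γ₃) (hγ₄ : 0 < γ₄)

include hγ₁ hγ₃ in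
lemma sB_pos (x : ℕ) : 0 < sB γ₁ γ₃ x := by
  have := quad_nonneg x
  unfold sB; nlinarith [mul_nonneg hγ₃.le this]

include hγ₂ hγ₄ in
lemma sD_nonneg (x : ℕ) : 0 ≤ sD γ₂ γ₄ x := by
  have h := cub_nonneg x
  unfold sD
  nlinarith [mul_nonneg hγ₂.le (Nat.cast_nonneg (α := ℝ) x), mul_nonneg hγ₄.le h]

include hγ₂ hγ₄ in
lemma sD_succ_pos (x : ℕ) : 0 < sD γ₂ γ₄ (x + 1) := by
  have h := cub_nonneg (x + 1)
  unfold sD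
  have h1 : (0:ℝ) < γ₂ * ((x : ℝ) + 1) := by positivity
  push_cast at h ⊢
  nlinarith [mul_nonneg hγ₄.le h]

include hγ₁ hγ₂ hγ₃ hγ₄ in
lemma sMu_pos (x : ℕ) : 0 < schloeglMu γ₁ γ₂ γ₃ γ₄ x := by
  have hb := sB_pos hγ₁ hγ₃ x
  have hd := sD_nonneg hγ₂ hγ₄ x
  unfold sB sD at *
  unfold schloeglMu
  nlinarith

lemma sMu_eq_add (x : ℕ) : schloeglMu γ₁ γ₂ γ₃ γ₄ x = sB γ₁ γ₃ x + sD γ₂ γ₄ x := by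
  unfold schloeglMu sB sD; ring

include hγ₁ hγ₂ hγ₃ hγ₄ in
lemma sNu_pos (x : ℕ) : 0 < sNu γ₁ γ₂ γ₃ γ₄ x := by
  induction x with
  | zero => exact sMu_pos hγ₁ hγ₂ hγ₃ hγ₄ 0
  | succ n ih =>
    rw [sNu]
    have h1 := sB_pos hγ₁ hγ₃ n
    have h2 := sMu_pos hγ₁ hγ₂ hγ₃ hγ₄ (n + 1)
    have h3 := sMu_pos hγ₁ hγ₂ hγ₃ hγ₄ n
    have h4 := sD_succ_pos hγ₂ hγ₄ n
    positivity

include hγ₁ hγ₂ hγ₃ hγ₄ in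
lemma sNu_db (x : ℕ) :
    sNu γ₁ γ₂ γ₃ γ₄ (x + 1) * sD γ₂ γ₄ (x + 1) / schloeglMu γ₁ γ₂ γ₃ γ₄ (x + 1)
      = sNu γ₁ γ₂ γ₃ γ₄ x * sB γ₁ γ₃ x / schloeglMu γ₁ γ₂ γ₃ γ₄ x := by
  have h2 := sMu_pos hγ₁ hγ₂ hγ₃ hγ₄ (x + 1)
  have h3 := sMu_pos hγ₁ hγ₂ hγ₃ hγ₄ x
  have h4 := sD_succ_pos hγ₂ hγ₄ x
  rw [sNu]
  field_simp

include hγ₁ hγ₂ hγ₃ hγ₄ in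
set_option maxHeartbeats 1000000 in
lemma ratio_bound : ∃ N : ℕ, ∀ n ≥ N,
    2 * sB γ₁ γ₃ n * schloeglMu γ₁ γ₂ γ₃ γ₄ (n + 1)
      ≤ schloeglMu γ₁ γ₂ γ₃ γ₄ n * sD γ₂ γ₄ (n + 1) := by
  set S : ℝ := γ₁ + γ₂ + γ₃ + γ₄ with hS
  obtain ⟨N₀, hN₀⟩ := exists_nat_ge (128 * S * (γ₁ + γ₃) / γ₄ ^ 2)
  refine ⟨max N₀ 4, fun n hn => ?_⟩
  have hr4 : (4 : ℝ) ≤ (n : ℝ) := by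
    have : (4 : ℕ) ≤ n := le_trans (le_max_right _ _) hn
    exact_mod_cast this
  have hrN : 128 * S * (γ₁ + γ₃) ≤ γ₄ ^ 2 * (n : ℝ) := by
    have h1 : (N₀ : ℝ) ≤ (n : ℝ) := by
      exact_mod_cast le_trans (le_max_left _ _) hn
    rw [div_le_iff₀ (by positivity)] at hN₀
    nlinarith [sq_nonneg γ₄]
  have hrn : (0:ℝ) ≤ (n : ℝ) := Nat.cast_nonneg n
  have hb : sB γ₁ γ₃ n ≤ (γ₁ + γ₃) * (n : ℝ) ^ 2 := by
    unfold sB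
    nlinarith [mul_nonneg hγ₃.le hrn,
      mul_nonneg hγ₁.le (show (0:ℝ) ≤ (n:ℝ) ^ 2 - 1 by nlinarith)]
  have hmu1 : schloeglMu γ₁ γ₂ γ₃ γ₄ (n + 1) ≤ 8 * S * (n : ℝ) ^ 3 := by
    have c1 : (0:ℝ) ≤ 8 * (n:ℝ) ^ 3 - 1 := by nlinarith
    have c2 : (0:ℝ) ≤ 8 * (n:ℝ) ^ 3 - ((n:ℝ) + 1) := by nlinarith
    have c3 : (0:ℝ) ≤ 8 * (n:ℝ) ^ 3 - ((n:ℝ) + 1) * (n:ℝ) := by nlinarith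
    have c4 : (0:ℝ) ≤ 8 * (n:ℝ) ^ 3 - ((n:ℝ) + 1) * (n:ℝ) * ((n:ℝ) - 1) := by
      nlinarith
    have e1 : γ₁ ≤ 8 * γ₁ * (n : ℝ) ^ 3 := by nlinarith [mul_nonneg hγ₁.le c1]
    have e2 : γ₂ * ((n : ℝ) + 1) ≤ 8 * γ₂ * (n : ℝ) ^ 3 := by
      nlinarith [mul_nonneg hγ₂.le c2]
    have e3 : γ₃ * ((n : ℝ) + 1) * ((n : ℝ) + 1 - 1) ≤ 8 * γ₃ * (n : ℝ) ^ 3 := by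
      nlinarith [mul_nonneg hγ₃.le c3]
    have e4 : γ₄ * ((n : ℝ) + 1) * ((n : ℝ) + 1 - 1) * ((n : ℝ) + 1 - 2)
        ≤ 8 * γ₄ * (n : ℝ) ^ 3 := by nlinarith [mul_nonneg hγ₄.le c4]
    unfold schloeglMu
    push_cast
    nlinarith [e1, e2, e3, e4]
  have hmu : γ₄ / 4 * (n : ℝ) ^ 3 ≤ schloeglMu γ₁ γ₂ γ₃ γ₄ n := by
    have e : (0:ℝ) ≤ (n:ℝ) * ((n:ℝ) - 1) * ((n:ℝ) - 2) - (n:ℝ) ^ 3 / 4 := by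
      nlinarith
    unfold schloeglMu
    nlinarith [mul_nonneg hγ₂.le (Nat.cast_nonneg (α := ℝ) n),
      mul_nonneg hγ₃.le (quad_nonneg n), mul_nonneg hγ₄.le e]
  have hd : γ₄ / 2 * (n : ℝ) ^ 3 ≤ sD γ₂ γ₄ (n + 1) := by
    have e : (0:ℝ) ≤ ((n:ℝ)+1) * (n:ℝ) * ((n:ℝ) - 1) - (n:ℝ) ^ 3 / 2 := by
      nlinarith
    unfold sD
    push_cast
    nlinarith [mul_nonneg hγ₂.le (by linarith : (0:ℝ) ≤ (n:ℝ) + 1),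
      mul_nonneg hγ₄.le e]
  have hbpos := (sB_pos hγ₁ hγ₃ n).le
  have hmupos := (sMu_pos hγ₁ hγ₂ hγ₃ hγ₄ (n + 1)).le
  calc 2 * sB γ₁ γ₃ n * schloeglMu γ₁ γ₂ γ₃ γ₄ (n + 1)
      ≤ 2 * ((γ₁ + γ₃) * (n : ℝ) ^ 2) * (8 * S * (n : ℝ) ^ 3) := by
        apply mul_le_mul (by linarith) hmu1 hmupos (by positivity)
    _ ≤ (γ₄ / 4 * (n : ℝ) ^ 3) * (γ₄ / 2 * (n : ℝ) ^ 3) := by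
        nlinarith [mul_nonneg (pow_nonneg hrn 5) (sub_nonneg.mpr hrN)]
    _ ≤ schloeglMu γ₁ γ₂ γ₃ γ₄ n * sD γ₂ γ₄ (n + 1) := by
        apply mul_le_mul hmu hd (by positivity) (le_trans (by positivity) hmu)

include hγ₁ hγ₂ hγ₃ hγ₄ in
lemma summable_sNu : Summable (sNu γ₁ γ₂ γ₃ γ₄) := by
  obtain ⟨N, hN⟩ := ratio_bound hγ₁ hγ₂ hγ₃ hγ₄
  apply summable_of_ratio_norm_eventually_le (r := 1 / 2) (by norm_num)
  filter_upwards [Filter.eventually_ge_atTop N] with n hn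
  have hpos := sNu_pos hγ₁ hγ₂ hγ₃ hγ₄ n
  have hpos1 := sNu_pos hγ₁ hγ₂ hγ₃ hγ₄ (n + 1)
  rw [Real.norm_of_nonneg hpos1.le, Real.norm_of_nonneg hpos.le, sNu]
  have key := hN n hn
  have hmun := sMu_pos hγ₁ hγ₂ hγ₃ hγ₄ n
  have hdn := sD_succ_pos hγ₂ hγ₄ n
  rw [div_le_iff₀ (by positivity)]
  nlinarith [mul_le_mul_of_nonneg_left key (half_pos hpos).le,
    (sMu_pos hγ₁ hγ₂ hγ₃ hγ₄ (n + 1)).le, (sB_pos hγ₁ hγ₃ n).le]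

include hγ₁ hγ₂ hγ₃ hγ₄ in
lemma sNu_station (y : ℕ) :
    ∑' x : ℕ, sNu γ₁ γ₂ γ₃ γ₄ x * schloeglP γ₁ γ₂ γ₃ γ₄ x y = sNu γ₁ γ₂ γ₃ γ₄ y := by
  cases y with
  | zero =>
    rw [tsum_station_zero, show (1:ℕ) = 0 + 1 from rfl, schloeglP_self_succ]
    have db := sNu_db hγ₁ hγ₂ hγ₃ hγ₄ 0
    have hB0 : sB γ₁ γ₃ 0 = γ₁ := by simp [sB]
    have hM0 : schloeglMu γ₁ γ₂ γ₃ γ₄ 0 = γ₁ := by simp [schloeglMu]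
    rw [hB0, hM0] at db
    rw [← mul_div_assoc, db, mul_div_cancel_right₀ _ hγ₁.ne']
  | succ k =>
    rw [tsum_station_succ, schloeglP_succ_self, schloeglP_self_succ]
    have db1 := sNu_db hγ₁ hγ₂ hγ₃ hγ₄ k
    have db2 := sNu_db hγ₁ hγ₂ hγ₃ hγ₄ (k + 1)
    have hμ := sMu_eq_add (γ₁ := γ₁) (γ₂ := γ₂) (γ₃ := γ₃) (γ₄ := γ₄) (k + 1)
    have hμpos := sMu_pos hγ₁ hγ₂ hγ₃ hγ₄ (k + 1)
    rw [← mul_div_assoc, ← mul_div_assoc, ← db1]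
    have h22 : sNu γ₁ γ₂ γ₃ γ₄ (k + 1 + 1) * sD γ₂ γ₄ (k + 1 + 1)
        / schloeglMu γ₁ γ₂ γ₃ γ₄ (k + 1 + 1)
        = sNu γ₁ γ₂ γ₃ γ₄ (k + 1) * sB γ₁ γ₃ (k + 1)
        / schloeglMu γ₁ γ₂ γ₃ γ₄ (k + 1) := db2
    rw [show k + 2 = k + 1 + 1 from rfl, h22, ← add_div, ← mul_add,
      add_comm (sD γ₂ γ₄ (k+1)), ← hμ, mul_div_cancel_right₀ _ hμpos.ne']

end

/-- The embedded Markov chain of the Schlögl model admits a unique stationary distribution: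
there is exactly one probability distribution `ρ` on `ℕ` satisfying
`Σ_x ρ(x)·P(x,y) = ρ(y)` for all `y`. -/
theorem stmt18 (γ₁ γ₂ γ₃ γ₄ : ℝ)
    (hγ₁ : 0 < γ₁) (hγ₂ : 0 < γ₂) (hγ₃ : 0 < γ₃) (hγ₄ : 0 < γ₄) :
    ∃! ρ : ℕ → ℝ, (∀ x, 0 ≤ ρ x ∧ ρ x ≤ 1) ∧ (∑' x, ρ x = 1) ∧
      (∀ y : ℕ, ∑' x : ℕ, ρ x * schloeglP γ₁ γ₂ γ₃ γ₄ x y = ρ y) := by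
  have hsum := summable_sNu hγ₁ hγ₂ hγ₃ hγ₄
  set ν := sNu γ₁ γ₂ γ₃ γ₄ with hν
  set Z := ∑' x, ν x with hZdef
  have hνpos : ∀ x, 0 < ν x := sNu_pos hγ₁ hγ₂ hγ₃ hγ₄
  have hle : ∀ x, ν x ≤ Z := fun x => Summable.le_tsum hsum x fun b _ => (hνpos b).le
  have hZ : 0 < Z := lt_of_lt_of_le (hνpos 0) (hle 0)
  refine ⟨fun x => ν x / Z,
    ⟨fun x => ⟨div_nonneg (hνpos x).le hZ.le, (div_le_one hZ).mpr (hle x)⟩, ?_, ?_⟩, ?_⟩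
  · rw [tsum_div_const, div_self hZ.ne']
  · intro y
    calc ∑' x : ℕ, ν x / Z * schloeglP γ₁ γ₂ γ₃ γ₄ x y
        = ∑' x : ℕ, (ν x * schloeglP γ₁ γ₂ γ₃ γ₄ x y) / Z :=
          tsum_congr fun x => by ring
      _ = (∑' x : ℕ, ν x * schloeglP γ₁ γ₂ γ₃ γ₄ x y) / Z := tsum_div_const
      _ = ν y / Z := by rw [sNu_station hγ₁ hγ₂ hγ₃ hγ₄ y]
  · rintro ρ ⟨h01, hsum1, hstat⟩
    have hdb : ∀ y, ρ (y + 1) * sD γ₂ γ₄ (y + 1) / schloeglMu γ₁ γ₂ γ₃ γ₄ (y + 1)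
        = ρ y * sB γ₁ γ₃ y / schloeglMu γ₁ γ₂ γ₃ γ₄ y := by
      intro y
      induction y with
      | zero =>
        have h0 := hstat 0
        rw [tsum_station_zero, show (1:ℕ) = 0 + 1 from rfl, schloeglP_self_succ] at h0
        have hB0 : sB γ₁ γ₃ 0 = γ₁ := by simp [sB]
        have hM0 : schloeglMu γ₁ γ₂ γ₃ γ₄ 0 = γ₁ := by simp [schloeglMu]
        rw [hB0, hM0, mul_div_cancel_right₀ _ hγ₁.ne', mul_div_assoc]
        exact h0
      | succ k ih =>
        have h1 := hstat (k + 1)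
        rw [tsum_station_succ, schloeglP_succ_self, show k + 2 = k + 1 + 1 from rfl,
          schloeglP_self_succ] at h1
        have hμ := sMu_eq_add (γ₁ := γ₁) (γ₂ := γ₂) (γ₃ := γ₃) (γ₄ := γ₄) (k + 1)
        have hμp := sMu_pos hγ₁ hγ₂ hγ₃ hγ₄ (k + 1)
        rw [← mul_div_assoc, ← mul_div_assoc, ← ih] at h1
        have key : ρ (k + 1) * sB γ₁ γ₃ (k + 1) / schloeglMu γ₁ γ₂ γ₃ γ₄ (k + 1)
            = ρ (k + 1) - ρ (k + 1) * sD γ₂ γ₄ (k + 1) / schloeglMu γ₁ γ₂ γ₃ γ₄ (k + 1) := by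
          rw [eq_sub_iff_add_eq, ← add_div, ← mul_add,
            add_comm (sB γ₁ γ₃ (k + 1)) (sD γ₂ γ₄ (k + 1))]
          rw [add_comm (sD γ₂ γ₄ (k + 1)) (sB γ₁ γ₃ (k + 1)), ← hμ,
            mul_div_cancel_right₀ _ hμp.ne']
        rw [key]
        linarith [h1]
    have hprop : ∀ x, ρ x = ρ 0 / ν 0 * ν x := by
      intro x
      induction x with
      | zero => rw [div_mul_cancel₀ _ (hνpos 0).ne']
      | succ k ih =>
        have h := hdb k
        rw [ih] at h
        have hμp := sMu_pos hγ₁ hγ₂ hγ₃ hγ₄ (k + 1)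
        have hμp0 := sMu_pos hγ₁ hγ₂ hγ₃ hγ₄ k
        have hdp := sD_succ_pos hγ₂ hγ₄ k
        have hrec : ν (k + 1) = ν k * (sB γ₁ γ₃ k * schloeglMu γ₁ γ₂ γ₃ γ₄ (k + 1)) /
            (schloeglMu γ₁ γ₂ γ₃ γ₄ k * sD γ₂ γ₄ (k + 1)) := by
          rw [hν]; rfl
        rw [hrec]
        field_simp [hμp.ne', hμp0.ne', hdp.ne', (hνpos 0).ne'] at h ⊢
        linear_combination h
    funext x
    have hsum2 : ∑' x, ρ x = ρ 0 / ν 0 * Z := by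
      rw [tsum_congr hprop, tsum_mul_left]
    rw [hsum1] at hsum2
    have hc : ρ 0 / ν 0 = 1 / Z := by
      rw [eq_div_iff hZ.ne']
      linarith [hsum2]
    rw [hprop x, hc]
    ring
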